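/- Enumeration over pairs suffices for a (1 − e^{−1})-approximation: Let (E, f, w, W) be an MSK instance and let Y ⊆ E be a feasible set (w(Y) ≤ W). Then there exists a set G ⊆ E with |G| ≤ 2 and w(G) ≤ W such that for every greedy execution on the MSK instance (E, f_G, w, W − w(G)) with output A, it holds that f(G ∪ A) ≥ (1 − e^{−1})·f(Y). -/

import Mathlib

open Finset

variable {α : Type*}

/-- A set function `f` is submodular on ground set `E`. -/
def SubmodularOn [DecidableEq α] (E : Finset α) (f : Finset α → ℝ) : Prop :=
  ∀ A B : Finset α, A ⊆ B → B ⊆ E → ∀ e ∈ E, e ∉ B →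
    f (insert e B) - f B ≤ f (insert e A) - f A

/-- A set function `f` is monotone on ground set `E`. -/
def MonotoneOnSets (E : Finset α) (f : Finset α → ℝ) : Prop :=
  ∀ S T : Finset α, S ⊆ T → T ⊆ E → f S ≤ f T

/-- A set function `f` is non-negative on ground set `E`. -/
def NonnegOn (E : Finset α) (f : Finset α → ℝ) : Prop :=
  ∀ S : Finset α, S ⊆ E → 0 ≤ f S

/-- Total weight of a set. -/
def wt (w : α → ℝ) (S : Finset α) : ℝ := ∑ e ∈ S, w e

/-- Marginal value `f_A(S) = f(A ∪ S) - f(A)`. -/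
def marginal [DecidableEq α] (f : Finset α → ℝ) (A S : Finset α) : ℝ := f (A ∪ S) - f A

/-- A greedy execution on the MSK instance `(E, f, w, W)`: an ordering `e_1, …, e_n`
of the elements of `E` (here `order`, 0-indexed) together with sets
`sol 0 = ∅ ⊆ sol 1 ⊆ … ⊆ sol n` such that at every step the considered element maximizes
the marginal density among the remaining elements, and it is added iff it fits. -/
structure GreedyExec [DecidableEq α] (E : Finset α) (f : Finset α → ℝ) (w : α → ℝ)
    (W : ℝ) where
  order : List α
  nodup : order.Nodup
  ground : order.toFinset = E
  sol : ℕ → Finset α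
  sol_zero : sol 0 = ∅
  greedy_max : ∀ (i : ℕ) (hi : i < order.length), ∀ e ∈ order.drop i,
    marginal f (sol i) {e} / w e ≤
      marginal f (sol i) {order.get ⟨i, hi⟩} / w (order.get ⟨i, hi⟩)
  step_add : ∀ (i : ℕ) (hi : i < order.length),
    wt w (sol i) + w (order.get ⟨i, hi⟩) ≤ W →
      sol (i + 1) = insert (order.get ⟨i, hi⟩) (sol i)
  step_skip : ∀ (i : ℕ) (hi : i < order.length),
    W < wt w (sol i) + w (order.get ⟨i, hi⟩) → sol (i + 1) = sol i

/-- The output of a greedy execution. -/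
def GreedyExec.out [DecidableEq α] {E : Finset α} {f : Finset α → ℝ} {w : α → ℝ} {W : ℝ}
    (g : GreedyExec E f w W) : Finset α := g.sol g.order.length

/- ===================== Auxiliary lemmas ===================== -/

section ListAux

variable {l : List α} {j k : ℕ}

lemma aux_get_mem_drop (hk : k < l.length) (hjk : j ≤ k) : l.get ⟨k, hk⟩ ∈ l.drop j := by
  have h2 : k - j < (l.drop j).length := by simp [List.length_drop]; omega
  have h3 : (l.drop j)[k - j] = l[j + (k - j)] := List.getElem_drop
  have h4 : j + (k - j) = k := by omega
  have h5 : (l.drop j)[k - j] = l.get ⟨k, hk⟩ := by rw [h3]; simp [h4]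
  rw [← h5]; exact List.getElem_mem _

lemma aux_mem_take {a : α} (h : a ∈ l.take j) :
    ∃ k, k < j ∧ ∃ hk : k < l.length, l.get ⟨k, hk⟩ = a := by
  obtain ⟨k, hk, he⟩ := List.mem_iff_getElem.1 h
  rw [List.length_take] at hk
  have hk1 : k < j := lt_of_lt_of_le hk (min_le_left _ _)
  have hk2 : k < l.length := lt_of_lt_of_le hk (min_le_right _ _)
  refine ⟨k, hk1, hk2, ?_⟩
  have h5 : (l.take j)[k] = l[k] := List.getElem_take
  simp only [List.get_eq_getElem, ← h5, he]

lemma aux_get_mem_take (hk : k < l.length) (hkj : k < j) : l.get ⟨k, hk⟩ ∈ l.take j := by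
  have h2 : k < (l.take j).length := by simp [List.length_take]; omega
  have h5 : (l.take j)[k] = l[k] := List.getElem_take
  have : (l.take j)[k] = l.get ⟨k, hk⟩ := by rw [h5]; simp
  rw [← this]; exact List.getElem_mem _

lemma aux_nodup_get_inj (h : l.Nodup) {i : ℕ} (hi : i < l.length) (hj : j < l.length)
    (he : l.get ⟨i, hi⟩ = l.get ⟨j, hj⟩) : i = j := by
  have := (List.Nodup.get_inj_iff h (i := ⟨i, hi⟩) (j := ⟨j, hj⟩)).mp he
  exact congrArg Fin.val this

end ListAux

section SubmodAux

variable [DecidableEq α] {E : Finset α} {f : Finset α → ℝ}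

lemma marg_nonneg (hmono : MonotoneOnSets E f) {A : Finset α} {e : α}
    (hA : A ⊆ E) (he : e ∈ E) : 0 ≤ f (insert e A) - f A := by
  have := hmono A (insert e A) (Finset.subset_insert _ _) (Finset.insert_subset he hA)
  linarith

lemma marg_mono (hmono : MonotoneOnSets E f) (hsub : SubmodularOn E f)
    {A B : Finset α} {e : α} (hAB : A ⊆ B) (hBE : B ⊆ E) (he : e ∈ E) :
    f (insert e B) - f B ≤ f (insert e A) - f A := by
  by_cases heB : e ∈ B
  · rw [Finset.insert_eq_self.2 heB]
    have := marg_nonneg hmono (hAB.trans hBE) he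
    linarith
  · exact hsub A B hAB hBE e he heB

lemma marg_subadd (hmono : MonotoneOnSets E f) (hsub : SubmodularOn E f)
    (U : Finset α) (hU : U ⊆ E) (T : Finset α) (hT : T ⊆ E) :
    f (U ∪ T) - f U ≤ ∑ y ∈ T \ U, (f (insert y U) - f U) := by
  induction T using Finset.induction_on with
  | empty => simp
  | @insert a T ha ih =>
    have hTE' : T ⊆ E := (Finset.subset_insert a T).trans hT
    have haE : a ∈ E := hT (Finset.mem_insert_self a T)
    by_cases haU : a ∈ U
    · have h1 : U ∪ insert a T = U ∪ T := by
        ext x; simp only [Finset.mem_union, Finset.mem_insert]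
        constructor
        · rintro (h | rfl | h) <;> tauto
        · tauto
      have h2 : insert a T \ U = T \ U := by
        ext x; simp only [Finset.mem_sdiff, Finset.mem_insert]
        constructor
        · rintro ⟨rfl | h, h2⟩
          · exact absurd haU h2
          · exact ⟨h, h2⟩
        · tauto
      rw [h1, h2]; exact ih hTE'
    · have h1 : U ∪ insert a T = insert a (U ∪ T) := by
        ext x; simp only [Finset.mem_union, Finset.mem_insert]; tauto
      have h2 : insert a T \ U = insert a (T \ U) := by
        ext x; simp only [Finset.mem_sdiff, Finset.mem_insert]
        constructor
        · rintro ⟨rfl | h, h2⟩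
          · exact Or.inl rfl
          · exact Or.inr ⟨h, h2⟩
        · rintro (rfl | ⟨h, h2⟩)
          · exact ⟨Or.inl rfl, haU⟩
          · exact ⟨Or.inr h, h2⟩
      have ha2 : a ∉ T \ U := by simp [ha]
      rw [h1, h2, Finset.sum_insert ha2]
      have haUT : a ∉ U ∪ T := by simp [haU, ha]
      have key : f (insert a (U ∪ T)) - f (U ∪ T) ≤ f (insert a U) - f U :=
        hsub U (U ∪ T) Finset.subset_union_left (Finset.union_subset hU hTE') a haE haUT
      have h3 := ih hTE'
      linarith

end SubmodAux

section WtAux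

variable {E : Finset α} {w : α → ℝ}

lemma wt_nonneg (hw : ∀ e ∈ E, 0 < w e) {X : Finset α} (hX : X ⊆ E) : 0 ≤ wt w X :=
  Finset.sum_nonneg (fun e he => (hw e (hX he)).le)

lemma wt_mono (hw : ∀ e ∈ E, 0 < w e) {X Y : Finset α} (hXY : X ⊆ Y) (hY : Y ⊆ E) :
    wt w X ≤ wt w Y :=
  Finset.sum_le_sum_of_subset_of_nonneg hXY (fun e he _ => (hw e (hY he)).le)

end WtAux

section GreedyAux

variable [DecidableEq α] {E : Finset α} {F : Finset α → ℝ} {w : α → ℝ} {W : ℝ}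
variable (g : GreedyExec E F w W)

lemma GE_sol_succ (i : ℕ) (hi : i < g.order.length) :
    g.sol (i + 1) = g.sol i ∨
      (wt w (g.sol i) + w (g.order.get ⟨i, hi⟩) ≤ W ∧
        g.sol (i + 1) = insert (g.order.get ⟨i, hi⟩) (g.sol i)) := by
  rcases le_or_gt (wt w (g.sol i) + w (g.order.get ⟨i, hi⟩)) W with h | h
  · exact Or.inr ⟨h, g.step_add i hi h⟩
  · exact Or.inl (g.step_skip i hi h)

lemma GE_sol_mono : ∀ {i j : ℕ}, i ≤ j → j ≤ g.order.length → g.sol i ⊆ g.sol j := by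
  intro i j hij hj
  induction j with
  | zero => have : i = 0 := Nat.le_zero.1 hij; subst this; rfl
  | succ n ihn =>
    rcases Nat.lt_or_ge i (n + 1) with h | h
    · have hn : n < g.order.length := lt_of_lt_of_le (Nat.lt_succ_self n) hj
      have h1 : g.sol i ⊆ g.sol n := ihn (Nat.lt_succ_iff.1 h) (le_of_lt hn)
      rcases GE_sol_succ g n hn with h2 | ⟨_, h2⟩
      · rw [h2]; exact h1
      · rw [h2]; exact h1.trans (Finset.subset_insert _ _)
    · have : i = n + 1 := le_antisymm hij h
      subst this; rfl

lemma GE_sol_sub_take : ∀ j, j ≤ g.order.length → g.sol j ⊆ (g.order.take j).toFinset := by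
  intro j
  induction j with
  | zero => intro _; rw [g.sol_zero]; intro x hx; exact absurd hx (Finset.notMem_empty x)
  | succ n ihn =>
    intro hj
    have hn : n < g.order.length := hj
    have htsub : (g.order.take n).toFinset ⊆ (g.order.take (n + 1)).toFinset := by
      intro a ha
      rw [List.mem_toFinset] at ha ⊢
      obtain ⟨k, hk, hkl, he⟩ := aux_mem_take ha
      rw [← he]; exact aux_get_mem_take hkl (lt_of_lt_of_le hk (Nat.le_succ n))
    rcases GE_sol_succ g n hn with h2 | ⟨_, h2⟩
    · rw [h2]; exact (ihn (le_of_lt hn)).trans htsub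
    · rw [h2]
      intro a ha
      rcases Finset.mem_insert.1 ha with rfl | ha2
      · rw [List.mem_toFinset]; exact aux_get_mem_take hn (Nat.lt_succ_self n)
      · exact htsub ((ihn (le_of_lt hn)) ha2)

lemma GE_sol_sub_E {j : ℕ} (hj : j ≤ g.order.length) : g.sol j ⊆ E := by
  intro a ha
  have h1 := GE_sol_sub_take g j hj ha
  rw [List.mem_toFinset] at h1
  have h2 : a ∈ g.order := List.take_subset j g.order h1
  rw [← g.ground, List.mem_toFinset]; exact h2

lemma GE_get_not_mem_sol {j : ℕ} (hj : j < g.order.length) :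
    g.order.get ⟨j, hj⟩ ∉ g.sol j := by
  intro hmem
  have h1 := GE_sol_sub_take g j (le_of_lt hj) hmem
  rw [List.mem_toFinset] at h1
  obtain ⟨k, hk, hkl, he⟩ := aux_mem_take h1
  have := aux_nodup_get_inj g.nodup hkl hj he
  omega

lemma GE_mem_sol_of_out {p : ℕ} (hp : p < g.order.length)
    (hout : g.order.get ⟨p, hp⟩ ∈ g.out) : g.order.get ⟨p, hp⟩ ∈ g.sol (p + 1) := by
  set y := g.order.get ⟨p, hp⟩ with hy
  have H : ∀ j, p + 1 ≤ j → j ≤ g.order.length → y ∈ g.sol j → y ∈ g.sol (p + 1) := by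
    intro j
    induction j with
    | zero => intro h; omega
    | succ n ihn =>
      intro h1 h2 h3
      rcases Nat.eq_or_lt_of_le h1 with heq | hlt
      · rw [heq]; exact h3
      · have hpn : p + 1 ≤ n := Nat.lt_succ_iff.1 hlt
        have hn : n < g.order.length := h2
        rcases GE_sol_succ g n hn with hs | ⟨_, hs⟩
        · rw [hs] at h3; exact ihn hpn (le_of_lt hn) h3
        · rw [hs] at h3
          rcases Finset.mem_insert.1 h3 with heq2 | h4
          · exfalso
            have := aux_nodup_get_inj g.nodup hp hn heq2
            omega
          · exact ihn hpn (le_of_lt hn) h4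
  exact H g.order.length (by omega) le_rfl hout

lemma GE_rejected {p : ℕ} (hp : p < g.order.length)
    (hout : g.order.get ⟨p, hp⟩ ∉ g.out) :
    W < wt w (g.sol p) + w (g.order.get ⟨p, hp⟩) := by
  by_contra hcon
  push_neg at hcon
  have hadd := g.step_add p hp hcon
  have h1 : g.order.get ⟨p, hp⟩ ∈ g.sol (p + 1) := by
    rw [hadd]; exact Finset.mem_insert_self _ _
  have h2 : g.sol (p + 1) ⊆ g.out := GE_sol_mono g (Nat.succ_le_of_lt hp) le_rfl
  exact hout (h2 h1)

end GreedyAux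

/- ===================== Core lemma ===================== -/

lemma core_greedy_bound [DecidableEq α] (E : Finset α) (f : Finset α → ℝ)
    (w : α → ℝ) (W : ℝ)
    (hf0 : NonnegOn E f) (hmono : MonotoneOnSets E f) (hsub : SubmodularOn E f)
    (hw : ∀ e ∈ E, 0 < w e)
    (Y : Finset α) (hY : Y ⊆ E) (hYfeas : wt w Y ≤ W)
    (G : Finset α) (hGY : G ⊆ Y)
    (hcap : ∀ y ∈ Y, y ∉ G → f (insert y G) - f G ≤ f G / 2) :
    ∀ g : GreedyExec E (fun S => f (G ∪ S) - f G) w (W - wt w G),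
      (1 - Real.exp (-1)) * f Y ≤ f (G ∪ g.out) := by
  intro g
  have hGE : G ⊆ E := hGY.trans hY
  set T : Finset α := Y \ G with hTdef
  have hTE : T ⊆ E := (Finset.sdiff_subset).trans hY
  have hGT : G ∪ T = Y := Finset.union_sdiff_of_subset hGY
  have hAE : g.out ⊆ E := GE_sol_sub_E g le_rfl
  have hGAE : G ∪ g.out ⊆ E := Finset.union_subset hGE hAE
  have hfY0 : 0 ≤ f Y := hf0 Y hY
  have hexp_pos : (0:ℝ) < Real.exp (-1) := Real.exp_pos _
  have hexp_le_one : Real.exp (-1) ≤ 1 := by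
    have := Real.exp_le_exp.2 (by norm_num : (-1:ℝ) ≤ 0)
    simpa using this
  have hfG0 : 0 ≤ f G := hf0 G hGE
  by_cases hTA : T ⊆ g.out
  · have h1 : f Y ≤ f (G ∪ g.out) := by
      rw [← hGT]
      exact hmono (G ∪ T) (G ∪ g.out) (Finset.union_subset Finset.subset_union_left
        (hTA.trans Finset.subset_union_right)) hGAE
    nlinarith
  · -- there is a rejected element of T; pick one with minimal index
    have hne : (T \ g.out).Nonempty := by
      obtain ⟨x, hx1, hx2⟩ := Finset.not_subset.1 hTA
      exact ⟨x, Finset.mem_sdiff.2 ⟨hx1, hx2⟩⟩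
    obtain ⟨estar, hestar_mem, hmin⟩ :=
      Finset.exists_min_image (T \ g.out) (fun y => g.order.idxOf y) hne
    have hestarT : estar ∈ T := (Finset.mem_sdiff.1 hestar_mem).1
    have hestarA : estar ∉ g.out := (Finset.mem_sdiff.1 hestar_mem).2
    have hestarE : estar ∈ E := hTE hestarT
    have hestarG : estar ∉ G := (Finset.mem_sdiff.1 hestarT).2
    have hestarY : estar ∈ Y := (Finset.mem_sdiff.1 hestarT).1
    have hestar_ord : estar ∈ g.order := by
      rw [← List.mem_toFinset, g.ground]; exact hestarE
    set p := g.order.idxOf estar with hpdef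
    have hp : p < g.order.length := List.idxOf_lt_length_iff.2 hestar_ord
    have hget : g.order.get ⟨p, hp⟩ = estar := List.idxOf_get hp
    have hrej : W - wt w G < wt w (g.sol p) + w estar := by
      have := GE_rejected g hp (by rw [hget]; exact hestarA)
      rwa [hget] at this
    set B := g.sol p with hBdef
    have hBE : B ⊆ E := GE_sol_sub_E g (le_of_lt hp)
    set T' : Finset α := T.erase estar with hT'def
    have hT'T : T' ⊆ T := Finset.erase_subset _ _
    have hT'E : T' ⊆ E := hT'T.trans hTE
    set S' : ℝ := f (G ∪ T') - f G with hS'def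
    set D' : ℝ := wt w T' with hD'def
    have hS'0 : 0 ≤ S' := by
      have := hmono G (G ∪ T') Finset.subset_union_left (Finset.union_subset hGE hT'E)
      simp only [hS'def]; linarith
    have hTins : T = insert estar T' := (Finset.insert_erase hestarT).symm
    have hestarT' : estar ∉ T' := Finset.notMem_erase _ _
    -- S - S' ≤ f G / 2
    have hcap_star : f (G ∪ T) - f (G ∪ T') ≤ f G / 2 := by
      have hGTins : G ∪ T = insert estar (G ∪ T') := by
        rw [hTins, Finset.union_insert]
      have hestarGT' : estar ∉ G ∪ T' := by
        rw [Finset.mem_union]; push_neg; exact ⟨hestarG, hestarT'⟩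
      have h1 : f (insert estar (G ∪ T')) - f (G ∪ T') ≤ f (insert estar G) - f G :=
        marg_mono hmono hsub Finset.subset_union_left
          (Finset.union_subset hGE hT'E) hestarE
      have h2 := hcap estar hestarY hestarG
      rw [hGTins]; linarith
    -- weights
    have hwtY : wt w Y = wt w G + wt w T := by
      rw [← hGT]; unfold wt
      exact Finset.sum_union Finset.disjoint_sdiff
    have hwtT : wt w T = w estar + D' := by
      rw [hTins]; unfold wt
      exact Finset.sum_insert hestarT'
    have hD'B : D' < wt w B := by
      have h1 : wt w G + wt w T ≤ W := by rw [← hwtY]; exact hYfeas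
      have h2 : wt w T = w estar + D' := hwtT
      linarith
    -- decay invariant
    have hdecay : S' - (f (G ∪ B) - f G) ≤ S' * Real.exp (-1) := by
      rcases Finset.eq_empty_or_nonempty T' with hT'e | hT'ne
      · have hS'z : S' = 0 := by
          simp only [hS'def, hT'e, Finset.union_empty, sub_self]
        have hgB : 0 ≤ f (G ∪ B) - f G := by
          have := hmono G (G ∪ B) Finset.subset_union_left (Finset.union_subset hGE hBE)
          linarith
        rw [hS'z]; simp; linarith
      · have hD' : 0 < D' :=
          Finset.sum_pos (fun i hi => hw i (hT'E hi)) hT'ne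
        have INV : ∀ j, j ≤ p →
            S' - (f (G ∪ g.sol j) - f G) ≤ S' * Real.exp (-(wt w (g.sol j)) / D') := by
          intro j
          induction j with
          | zero =>
            intro _
            rw [g.sol_zero]
            simp only [Finset.union_empty, sub_self, sub_zero, wt, Finset.sum_empty,
              neg_zero, zero_div, Real.exp_zero, mul_one]
            exact le_rfl
          | succ n ihn =>
            intro hnp
            have hnp' : n ≤ p := Nat.le_of_succ_le hnp
            have hIH := ihn hnp'
            have hnlen : n < g.order.length := by omega
            rcases GE_sol_succ g n hnlen with hskip | ⟨_, hadd⟩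
            · rw [hskip]; exact hIH
            · set ej := g.order.get ⟨n, hnlen⟩ with hejdef
              have hejE : ej ∈ E := by
                rw [← g.ground, List.mem_toFinset, hejdef]
                exact List.get_mem _ _
              have hwej : 0 < w ej := hw ej hejE
              have hejsol : ej ∉ g.sol n := GE_get_not_mem_sol g hnlen
              have hsolE : g.sol n ⊆ E := GE_sol_sub_E g (le_of_lt hnlen)
              have hGsolE : G ∪ g.sol n ⊆ E := Finset.union_subset hGE hsolE
              set gain : ℝ := f (G ∪ insert ej (g.sol n)) - f (G ∪ g.sol n) with hgaindef
              have hgain0 : 0 ≤ gain := by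
                have := hmono (G ∪ g.sol n) (G ∪ insert ej (g.sol n))
                  (Finset.union_subset_union_right (Finset.subset_insert _ _))
                  (Finset.union_subset hGE (Finset.insert_subset hejE hsolE))
                simp only [hgaindef]; linarith
              -- key step inequality
              have keystep : (S' - (f (G ∪ g.sol n) - f G)) * w ej ≤ gain * D' := by
                have hchain1 : S' - (f (G ∪ g.sol n) - f G) ≤
                    f ((G ∪ g.sol n) ∪ T') - f (G ∪ g.sol n) := by
                  have h1 : f (G ∪ T') ≤ f ((G ∪ g.sol n) ∪ T') := by
                    apply hmono
                    · exact Finset.union_subset_union_left Finset.subset_union_left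
                    · exact Finset.union_subset hGsolE hT'E
                  simp only [hS'def]; linarith
                have hchain2 := marg_subadd hmono hsub (G ∪ g.sol n) hGsolE T' hT'E
                have hper : ∀ y ∈ T' \ (G ∪ g.sol n),
                    f (insert y (G ∪ g.sol n)) - f (G ∪ g.sol n) ≤ gain / w ej * w y := by
                  intro y hy
                  obtain ⟨hyT', hyGsol⟩ := Finset.mem_sdiff.1 hy
                  have hyE : y ∈ E := hT'E hyT'
                  have hwy : 0 < w y := hw y hyE
                  have hy_ord : y ∈ g.order := by
                    rw [← List.mem_toFinset, g.ground]; exact hyE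
                  set q := g.order.idxOf y with hqdef
                  have hq : q < g.order.length := List.idxOf_lt_length_iff.2 hy_ord
                  have hgetq : g.order.get ⟨q, hq⟩ = y := List.idxOf_get hq
                  have hynsol : y ∉ g.sol n := fun hc => hyGsol (Finset.mem_union_right _ hc)
                  have hqn : n ≤ q := by
                    by_contra hqn
                    push_neg at hqn
                    -- q < n ≤ p : y was processed earlier, so y ∈ g.out
                    have hyout : y ∈ g.out := by
                      by_contra hyout
                      have hymem : y ∈ T \ g.out :=
                        Finset.mem_sdiff.2 ⟨hT'T hyT', hyout⟩
                      have := hmin y hymem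
                      simp only [← hqdef, ← hpdef] at this
                      omega
                    have h1 : y ∈ g.sol (q + 1) := by
                      have := GE_mem_sol_of_out g hq (by rw [hgetq]; exact hyout)
                      rwa [hgetq] at this
                    have h2 : g.sol (q + 1) ⊆ g.sol n :=
                      GE_sol_mono g (by omega) (le_of_lt hnlen)
                    exact hynsol (h2 h1)
                  have hdrop : y ∈ g.order.drop n := by
                    rw [← hgetq]; exact aux_get_mem_drop hq hqn
                  have hgm := g.greedy_max n hnlen y hdrop
                  rw [← hejdef] at hgm
                  simp only [marginal] at hgm
                  have hrw1 : g.sol n ∪ {y} = insert y (g.sol n) := by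
                    rw [Finset.union_comm]; rfl
                  have hrw2 : g.sol n ∪ {ej} = insert ej (g.sol n) := by
                    rw [Finset.union_comm]; rfl
                  rw [hrw1, hrw2] at hgm
                  have hrw3 : G ∪ insert y (g.sol n) = insert y (G ∪ g.sol n) :=
                    Finset.union_insert _ _ _
                  rw [hrw3] at hgm
                  have hmy := mul_le_mul_of_nonneg_right hgm hwy.le
                  rw [div_mul_cancel₀ _ (ne_of_gt hwy)] at hmy
                  have hnum : f (G ∪ insert ej (g.sol n)) - f G - (f (G ∪ g.sol n) - f G)
                      = gain := by rw [hgaindef]; ring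
                  rw [hnum] at hmy
                  linarith [hmy]
                have hsum : ∑ y ∈ T' \ (G ∪ g.sol n),
                    (f (insert y (G ∪ g.sol n)) - f (G ∪ g.sol n)) ≤
                    gain / w ej * ∑ y ∈ T' \ (G ∪ g.sol n), w y := by
                  rw [Finset.mul_sum]
                  exact Finset.sum_le_sum hper
                have hwsum : ∑ y ∈ T' \ (G ∪ g.sol n), w y ≤ D' := by
                  apply Finset.sum_le_sum_of_subset_of_nonneg Finset.sdiff_subset
                  intro i hi _
                  exact (hw i (hT'E hi)).le
                have hsum2 : gain / w ej * ∑ y ∈ T' \ (G ∪ g.sol n), w y ≤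
                    gain / w ej * D' :=
                  mul_le_mul_of_nonneg_left hwsum (div_nonneg hgain0 hwej.le)
                have htot : S' - (f (G ∪ g.sol n) - f G) ≤ gain / w ej * D' := by
                  linarith
                have := mul_le_mul_of_nonneg_right htot hwej.le
                calc (S' - (f (G ∪ g.sol n) - f G)) * w ej
                    ≤ gain / w ej * D' * w ej := this
                  _ = gain * D' := by field_simp
              -- arithmetic for the step
              have hwt1 : wt w (g.sol (n + 1)) = wt w (g.sol n) + w ej := by
                rw [hadd]; unfold wt; rw [Finset.sum_insert hejsol]; ring
              have hval1 : f (G ∪ g.sol (n + 1)) - f G =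
                  (f (G ∪ g.sol n) - f G) + gain := by
                rw [hadd, hgaindef]; ring
              rw [hwt1, hval1]
              set φ : ℝ := S' - (f (G ∪ g.sol n) - f G) with hφdef
              set x : ℝ := wt w (g.sol n) with hxdef
              set v : ℝ := w ej with hvdef
              have hexpsplit : Real.exp (-(x + v) / D') =
                  Real.exp (-x / D') * Real.exp (-v / D') := by
                rw [← Real.exp_add]
                congr 1
                field_simp
                ring
              have hub : 1 - v / D' ≤ Real.exp (-v / D') := by
                have := Real.add_one_le_exp (-(v / D'))
                have h2 : -(v / D') = -v / D' := by ring
                rw [h2] at this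
                linarith
              have hgoal : S' - ((f (G ∪ g.sol n) - f G) + gain) = φ - gain := by
                rw [hφdef]; ring
              rw [hgoal, hexpsplit]
              have hexpx : 0 < Real.exp (-x / D') := Real.exp_pos _
              have hexpv : 0 < Real.exp (-v / D') := Real.exp_pos _
              rcases le_or_gt φ 0 with hφ0 | hφ0
              · have h1 : φ - gain ≤ 0 := by linarith
                have h2 : 0 ≤ S' * (Real.exp (-x / D') * Real.exp (-v / D')) :=
                  mul_nonneg hS'0 (mul_nonneg hexpx.le hexpv.le)
                linarith
              · have hgainlb : φ * v / D' ≤ gain := by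
                  rw [div_le_iff₀ hD']
                  calc φ * v ≤ gain * D' := keystep
                    _ = gain * D' := rfl
                have h1 : φ - gain ≤ φ * (1 - v / D') := by
                  have : φ * (1 - v / D') = φ - φ * v / D' := by ring
                  rw [this]
                  linarith
                rcases le_or_gt (1 - v / D') 0 with hv0 | hv0
                · have h2 : φ * (1 - v / D') ≤ 0 :=
                    mul_nonpos_of_nonneg_of_nonpos hφ0.le hv0
                  have h3 : 0 ≤ S' * (Real.exp (-x / D') * Real.exp (-v / D')) :=
                    mul_nonneg hS'0 (mul_nonneg hexpx.le hexpv.le)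
                  linarith
                · have h2 : φ ≤ S' * Real.exp (-x / D') := hIH
                  have h3 : φ * (1 - v / D') ≤
                      S' * Real.exp (-x / D') * (1 - v / D') :=
                    mul_le_mul_of_nonneg_right h2 hv0.le
                  have h4 : S' * Real.exp (-x / D') * (1 - v / D') ≤
                      S' * Real.exp (-x / D') * Real.exp (-v / D') :=
                    mul_le_mul_of_nonneg_left hub
                      (mul_nonneg hS'0 hexpx.le)
                  calc φ - gain ≤ φ * (1 - v / D') := h1
                    _ ≤ S' * Real.exp (-x / D') * (1 - v / D') := h3
                    _ ≤ S' * Real.exp (-x / D') * Real.exp (-v / D') := h4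
                    _ = S' * (Real.exp (-x / D') * Real.exp (-v / D')) := by ring
        have hINVp := INV p le_rfl
        have hexp2 : Real.exp (-(wt w B) / D') ≤ Real.exp (-1) := by
          apply Real.exp_le_exp.2
          rw [div_le_iff₀ hD']
          have : -(wt w B) ≤ -D' := by linarith
          linarith
        calc S' - (f (G ∪ B) - f G) ≤ S' * Real.exp (-(wt w B) / D') := hINVp
          _ ≤ S' * Real.exp (-1) := mul_le_mul_of_nonneg_left hexp2 hS'0
    -- conclude
    have hBA : B ⊆ g.out := GE_sol_mono g (le_of_lt hp) le_rfl
    have hmonoBA : f (G ∪ B) ≤ f (G ∪ g.out) :=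
      hmono (G ∪ B) (G ∪ g.out)
        (Finset.union_subset_union_right hBA) hGAE
    have hfYeq : f Y = f (G ∪ T) := by rw [hGT]
    have hexp3 : (1:ℝ) / 3 ≤ Real.exp (-1) := by
      have h1 : Real.exp 1 < 2.7182818286 := Real.exp_one_lt_d9
      have h2 : (0:ℝ) < Real.exp 1 := Real.exp_pos 1
      have h3 : Real.exp (-1) = (Real.exp 1)⁻¹ := Real.exp_neg 1
      rw [h3]
      rw [le_inv_comm₀ (by norm_num) h2]
      · linarith
    -- final arithmetic
    have hfinal1 : f (G ∪ T) ≤ f G + S' + f G / 2 := by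
      simp only [hS'def] at hcap_star ⊢; linarith
    have hfinal2 : f G + S' * (1 - Real.exp (-1)) ≤ f (G ∪ g.out) := by
      have : S' * (1 - Real.exp (-1)) ≤ f (G ∪ B) - f G := by linarith [hdecay]
      linarith
    rw [hfYeq]
    nlinarith [mul_le_mul_of_nonneg_left hfinal1 (by linarith : (0:ℝ) ≤ 1 - Real.exp (-1)),
      mul_nonneg hfG0 (by linarith : (0:ℝ) ≤ 3 * Real.exp (-1) - 1)]

/- ===================== Main theorem ===================== -/

/-- Theorem 1.1 / Lemma 3.1: enumeration over pairs suffices for a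
`(1 - e⁻¹)`-approximation. For every MSK instance `(E, f, w, W)` and feasible `Y ⊆ E`,
there is `G ⊆ E` with `|G| ≤ 2` and `w(G) ≤ W` such that every greedy execution on the
instance `(E, f_G, w, W - w(G))` with output `A` satisfies
`f(G ∪ A) ≥ (1 - e⁻¹)·f(Y)`. -/
theorem enum_greedy_two_approximation [DecidableEq α] (E : Finset α) (f : Finset α → ℝ)
    (w : α → ℝ) (W : ℝ)
    (hf0 : NonnegOn E f) (hmono : MonotoneOnSets E f) (hsub : SubmodularOn E f)
    (hw : ∀ e ∈ E, 0 < w e) (hW : 0 ≤ W)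
    (Y : Finset α) (hY : Y ⊆ E) (hYfeas : wt w Y ≤ W) :
    ∃ G ⊆ E, G.card ≤ 2 ∧ wt w G ≤ W ∧
      ∀ g : GreedyExec E (fun S => f (G ∪ S) - f G) w (W - wt w G),
        (1 - Real.exp (-1)) * f Y ≤ f (G ∪ g.out) := by
  by_cases hcard : Y.card ≤ 2
  · refine ⟨Y, hY, hcard, hYfeas, ?_⟩
    exact core_greedy_bound E f w W hf0 hmono hsub hw Y hY hYfeas Y le_rfl
      (fun y hy hyn => absurd hy hyn)
  · push_neg at hcard
    have hYne : Y.Nonempty := Finset.card_pos.1 (by omega)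
    obtain ⟨y₁, hy₁Y, hy₁max⟩ := Finset.exists_max_image Y (fun y => f {y}) hYne
    have hEr : (Y.erase y₁).Nonempty := by
      rw [← Finset.card_pos, Finset.card_erase_of_mem hy₁Y]; omega
    obtain ⟨y₂, hy₂, hy₂max⟩ :=
      Finset.exists_max_image (Y.erase y₁) (fun y => f (insert y {y₁})) hEr
    have hy₂Y : y₂ ∈ Y := Finset.mem_of_mem_erase hy₂
    have hy21 : y₂ ≠ y₁ := Finset.ne_of_mem_erase hy₂
    set G : Finset α := insert y₂ {y₁} with hGdef
    have hGY : G ⊆ Y := by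
      intro a ha
      rcases Finset.mem_insert.1 ha with rfl | ha2
      · exact hy₂Y
      · rw [Finset.mem_singleton.1 ha2]; exact hy₁Y
    have hGE : G ⊆ E := hGY.trans hY
    have hy₁E : y₁ ∈ E := hY hy₁Y
    have hy₂E : y₂ ∈ E := hY hy₂Y
    have hcard2 : G.card ≤ 2 := by
      calc G.card ≤ ({y₁} : Finset α).card + 1 := Finset.card_insert_le _ _
        _ = 2 := by rw [Finset.card_singleton]
    have hwtG : wt w G ≤ W := le_trans (wt_mono hw hGY hY) hYfeas
    have hcap : ∀ y ∈ Y, y ∉ G → f (insert y G) - f G ≤ f G / 2 := by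
      intro y hyY hyG
      have hyE : y ∈ E := hY hyY
      have hyne1 : y ≠ y₁ := by
        intro h; apply hyG; rw [h, hGdef]; exact Finset.mem_insert_of_mem (Finset.mem_singleton_self y₁)
      have c1 : f (insert y G) - f G ≤ f (insert y {y₁}) - f {y₁} := by
        apply marg_mono hmono hsub _ hGE hyE
        intro a ha
        rw [Finset.mem_singleton.1 ha]
        exact Finset.mem_insert_of_mem (Finset.mem_singleton_self _)
      have c2 : f (insert y {y₁}) ≤ f G := by
        have := hy₂max y (Finset.mem_erase.2 ⟨hyne1, hyY⟩)
        rwa [hGdef]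
      have c3 : f G ≤ f {y₁} + f {y₂} := by
        have hpair : (insert y₁ {y₂} : Finset α) = insert y₂ {y₁} := by
          ext a; simp only [Finset.mem_insert, Finset.mem_singleton]; tauto
        have hy₁n2 : y₁ ∉ ({y₂} : Finset α) := by
          rw [Finset.mem_singleton]; exact fun h => hy21 h.symm
        have hs := hsub ∅ {y₂} (Finset.empty_subset _)
          (Finset.singleton_subset_iff.2 hy₂E) y₁ hy₁E hy₁n2
        have hins : insert y₁ (∅ : Finset α) = {y₁} := rfl
        rw [hins, hpair] at hs
        have hfe : 0 ≤ f ∅ := hf0 ∅ (Finset.empty_subset _)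
        rw [hGdef]
        linarith
      have c4 : f {y₂} ≤ f {y₁} := hy₁max y₂ hy₂Y
      linarith
    exact ⟨G, hGE, hcard2, hwtG,
      core_greedy_bound E f w W hf0 hmono hsub hw Y hY hYfeas G hGY hcap⟩
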